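/- Let X be a metric space, let φ be a continuous semiflow on X, and let x ∈ X be such that the forward orbit { φ(t, x) : t ≥ 0 } has compact closure. Let V : X → ℝ be continuous and nonincreasing along trajectories, i.e. V(φ(t, y)) ≤ V(y) for all t ≥ 0 and y ∈ X. Then V is constant on the ω-limit set ω(x), with constant value lim_{t → ∞} V(φ(t, x)); consequently every y ∈ ω(x) satisfies V(φ(t, y)) = V(y) for all t ≥ 0 (LaSalle's invariance principle). -/
import Mathlib


open Metric Set Filter Topology

/-- **LaSalle's invariance principle:** if `V` is a continuous Lyapunov function
(nonincreasing along trajectories) for a continuous semiflow `φ`, and the forward orbit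
of `x` has compact closure, then `V` is constant on the ω-limit set `ω(x)`, with value
`lim_{t→∞} V(φ(t,x))`; consequently `V(φ(t,y)) = V(y)` for all `y ∈ ω(x)` and `t ≥ 0`. -/
theorem lasalle_invariance_principle
    {X : Type*} [MetricSpace X]
    (φ : ℝ → X → X)
    (hcont : Continuous fun p : ℝ × X => φ p.1 p.2)
    (hid : ∀ x : X, φ 0 x = x)
    (hsemi : ∀ t s : ℝ, 0 ≤ t → 0 ≤ s → ∀ x : X, φ (t + s) x = φ t (φ s x))
    (x : X)
    (horbit : IsCompact (closure {y : X | ∃ t : ℝ, 0 ≤ t ∧ φ t x = y}))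
    (V : X → ℝ) (hV : Continuous V)
    (hdecr : ∀ t : ℝ, 0 ≤ t → ∀ y : X, V (φ t y) ≤ V y) :
    (∃ ℓ : ℝ, Tendsto (fun t : ℝ => V (φ t x)) atTop (nhds ℓ) ∧
        ∀ y ∈ ⋂ s ∈ Ici (0 : ℝ), closure {y : X | ∃ t : ℝ, s ≤ t ∧ φ t x = y}, V y = ℓ) ∧
      ∀ y ∈ ⋂ s ∈ Ici (0 : ℝ), closure {y : X | ∃ t : ℝ, s ≤ t ∧ φ t x = y},
        ∀ t : ℝ, 0 ≤ t → V (φ t y) = V y := by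
  set f : ℝ → ℝ := fun t => V (φ t x) with hfdef
  -- f is antitone on [0, ∞)
  have hmono : ∀ s t : ℝ, 0 ≤ s → s ≤ t → f t ≤ f s := by
    intro s t hs hst
    have h1 : φ t x = φ (t - s) (φ s x) := by
      rw [← hsemi (t - s) s (by linarith) hs, sub_add_cancel]
    show V (φ t x) ≤ V (φ s x)
    rw [h1]
    exact hdecr _ (by linarith) _
  set g : ℝ → ℝ := fun t => f (max t 0) with hgdef
  have hganti : Antitone g := by
    intro a b hab
    exact hmono _ _ (le_max_right a 0) (max_le_max hab le_rfl)
  have hbdd : BddBelow (range g) := by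
    obtain ⟨C, hC⟩ := (horbit.image hV).bddBelow
    refine ⟨C, ?_⟩
    rintro r ⟨t, rfl⟩
    exact hC ⟨φ (max t 0) x, subset_closure ⟨max t 0, le_max_right t 0, rfl⟩, rfl⟩
  set ℓ : ℝ := ⨅ t, g t with hldef
  have hgt : Tendsto g atTop (nhds ℓ) := tendsto_atTop_ciInf hganti hbdd
  have hft : Tendsto f atTop (nhds ℓ) := by
    refine hgt.congr' ?_
    filter_upwards [eventually_ge_atTop (0 : ℝ)] with t ht
    simp [hgdef, max_eq_left ht]
  -- sequence approximation of points in the omega limit set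
  have hkey : ∀ y ∈ ⋂ s ∈ Ici (0 : ℝ), closure {y : X | ∃ t : ℝ, s ≤ t ∧ φ t x = y},
      ∃ T : ℕ → ℝ, (∀ n : ℕ, (n : ℝ) ≤ T n) ∧
        Tendsto (fun n => φ (T n) x) atTop (nhds y) := by
    intro y hy
    simp only [mem_iInter, mem_Ici] at hy
    have h : ∀ n : ℕ, ∃ t : ℝ, (n : ℝ) ≤ t ∧ dist y (φ t x) < 1 / (n + 1) := by
      intro n
      have := hy n (Nat.cast_nonneg n)
      rw [Metric.mem_closure_iff] at this
      obtain ⟨z, ⟨t, ht, rfl⟩, hd⟩ := this (1 / (n + 1)) (by positivity)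
      exact ⟨t, ht, hd⟩
    choose T hT1 hT2 using h
    refine ⟨T, hT1, ?_⟩
    rw [tendsto_iff_dist_tendsto_zero]
    refine squeeze_zero (fun n => dist_nonneg) (fun n => ?_)
      tendsto_one_div_add_atTop_nhds_zero_nat
    rw [dist_comm]
    exact (hT2 n).le
  have hTtop : ∀ T : ℕ → ℝ, (∀ n : ℕ, (n : ℝ) ≤ T n) → Tendsto T atTop atTop :=
    fun T hT => tendsto_atTop_mono hT tendsto_natCast_atTop_atTop
  have hval : ∀ y ∈ ⋂ s ∈ Ici (0 : ℝ), closure {y : X | ∃ t : ℝ, s ≤ t ∧ φ t x = y},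
      V y = ℓ := by
    intro y hy
    obtain ⟨T, hT1, hT2⟩ := hkey y hy
    have h1 : Tendsto (fun n => V (φ (T n) x)) atTop (nhds (V y)) :=
      (hV.tendsto y).comp hT2
    have h2 : Tendsto (fun n => f (T n)) atTop (nhds ℓ) := hft.comp (hTtop T hT1)
    exact tendsto_nhds_unique h1 h2
  refine ⟨⟨ℓ, hft, hval⟩, ?_⟩
  intro y hy t ht
  obtain ⟨T, hT1, hT2⟩ := hkey y hy
  have hTnn : ∀ n, (0 : ℝ) ≤ T n := fun n => le_trans (Nat.cast_nonneg n) (hT1 n)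
  -- φ t y is in the omega limit set
  have hmem : φ t y ∈ ⋂ s ∈ Ici (0 : ℝ), closure {y : X | ∃ t : ℝ, s ≤ t ∧ φ t x = y} := by
    simp only [mem_iInter, mem_Ici]
    intro s hs
    have hc : Continuous fun z : X => φ t z :=
      hcont.comp (continuous_const.prodMk continuous_id)
    have hlim : Tendsto (fun n => φ (t + T n) x) atTop (nhds (φ t y)) := by
      have : Tendsto (fun n => φ t (φ (T n) x)) atTop (nhds (φ t y)) :=
        (hc.tendsto y).comp hT2
      refine this.congr fun n => ?_
      rw [hsemi t (T n) ht (hTnn n)]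
    refine mem_closure_of_tendsto hlim ?_
    filter_upwards [(hTtop T hT1).eventually_ge_atTop s] with n hn
    exact ⟨t + T n, by linarith [hTnn n], rfl⟩
  rw [hval _ hmem, hval _ hy]
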